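/- For every real a > -2 there exists a constant C > 0 such that for all integers k ≥ 4, Σ_{j=2}^{k-2} Γ(j+a)·Γ(k-j+a) ≤ C·Γ(k-2+a). -/

import Mathlib

open Real Finset

/-- Coefficient bound from the product of ratios, valid for `2 ≤ j`, `2j+1 ≤ k`. -/
lemma stmt4_aux1 (a : ℝ) (ha : -2 < a) (j : ℕ) (h2 : 2 ≤ j) :
    ∀ k : ℕ, 2 * j + 1 ≤ k →
      Real.Gamma ((j : ℝ) + a) * Real.Gamma ((k : ℝ) - (j : ℝ) + a)
        ≤ (2 + a) * (3 + a) / (((j : ℝ) + a) * ((j : ℝ) + 1 + a)) *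
          (Real.Gamma (2 + a) * Real.Gamma ((k : ℝ) - 2 + a)) := by
  induction j, h2 using Nat.le_induction with
  | base =>
    intro k hk
    have h1 : (0:ℝ) < 2 + a := by linarith
    have h2 : (0:ℝ) < 3 + a := by linarith
    have : ((2:ℕ):ℝ) = (2:ℝ) := by norm_num
    rw [this]
    rw [show (2 + a) * (3 + a) / ((2 + a) * (2 + 1 + a)) = 1 by
      rw [div_eq_one_iff_eq (ne_of_gt (mul_pos h1 (by linarith)))]; ring]
    rw [one_mul]
  | succ j h2 IH =>
    intro k hk
    have hkR : (2:ℝ) * j + 3 ≤ (k:ℝ) := by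
      have : ((2*(j+1)+1 : ℕ) : ℝ) ≤ (k:ℝ) := by exact_mod_cast hk
      push_cast at this; linarith
    have hjR : (2:ℝ) ≤ (j:ℝ) := by exact_mod_cast h2
    have hJ : (0:ℝ) < (j:ℝ) + a := by linarith
    have hJ1 : (0:ℝ) < (j:ℝ) + 1 + a := by linarith
    have hJ2 : (0:ℝ) < (j:ℝ) + 2 + a := by linarith
    have hK' : (0:ℝ) < (k:ℝ) - (j:ℝ) - 1 + a := by linarith
    have h2a : (0:ℝ) < 2 + a := by linarith
    have h3a : (0:ℝ) < 3 + a := by linarith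
    set G1 := Real.Gamma ((j:ℝ) + a) with hG1
    set G2 := Real.Gamma ((k:ℝ) - (j:ℝ) - 1 + a) with hG2
    have hG1pos : 0 < G1 := Real.Gamma_pos_of_pos hJ
    have hG2pos : 0 < G2 := Real.Gamma_pos_of_pos hK'
    have hM : 0 < Real.Gamma (2 + a) * Real.Gamma ((k : ℝ) - 2 + a) := by
      apply mul_pos (Real.Gamma_pos_of_pos h2a) (Real.Gamma_pos_of_pos (by linarith))
    have hA : Real.Gamma (((j:ℕ):ℝ) + 1 + a) = ((j:ℝ) + a) * G1 := by
      rw [show ((j:ℕ):ℝ) + 1 + a = ((j:ℝ) + a) + 1 by ring,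
        Real.Gamma_add_one (ne_of_gt hJ)]
    have hB : Real.Gamma ((k:ℝ) - (j:ℝ) + a) = ((k:ℝ) - (j:ℝ) - 1 + a) * G2 := by
      rw [show (k:ℝ) - (j:ℝ) + a = ((k:ℝ) - (j:ℝ) - 1 + a) + 1 by ring,
        Real.Gamma_add_one (ne_of_gt hK')]
    have hIH := IH k (by omega)
    rw [hB] at hIH
    -- goal args
    have goal_eq1 : ((j:ℕ)+1 : ℕ) = j + 1 := rfl
    push_cast
    rw [show (k:ℝ) - ((j:ℝ) + 1) + a = (k:ℝ) - (j:ℝ) - 1 + a by ring]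
    rw [hA]
    -- now goal : ((j+a) * G1) * G2 ≤ d_{j+1} * M
    have key : G1 * G2 ≤ (2 + a) * (3 + a) / (((j:ℝ) + a) * ((j:ℝ) + 1 + a)) *
        (Real.Gamma (2 + a) * Real.Gamma ((k : ℝ) - 2 + a)) / ((k:ℝ) - (j:ℝ) - 1 + a) := by
      rw [le_div_iff₀ hK']
      calc G1 * G2 * ((k:ℝ) - (j:ℝ) - 1 + a) = G1 * (((k:ℝ) - (j:ℝ) - 1 + a) * G2) := by ring
      _ ≤ _ := hIH
    calc ((j:ℝ) + a) * G1 * G2 = ((j:ℝ)+a) * (G1 * G2) := by ring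
      _ ≤ ((j:ℝ)+a) * ((2 + a) * (3 + a) / (((j:ℝ) + a) * ((j:ℝ) + 1 + a)) *
          (Real.Gamma (2 + a) * Real.Gamma ((k : ℝ) - 2 + a)) / ((k:ℝ) - (j:ℝ) - 1 + a)) := by
        exact mul_le_mul_of_nonneg_left key (le_of_lt hJ)
      _ = (2 + a) * (3 + a) / (((j:ℝ) + 1 + a) * ((k:ℝ) - (j:ℝ) - 1 + a)) *
          (Real.Gamma (2 + a) * Real.Gamma ((k : ℝ) - 2 + a)) := by
        field_simp
      _ ≤ (2 + a) * (3 + a) / (((j:ℝ) + 1 + a) * ((j:ℝ) + 1 + 1 + a)) *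
          (Real.Gamma (2 + a) * Real.Gamma ((k : ℝ) - 2 + a)) := by
        apply mul_le_mul_of_nonneg_right _ (le_of_lt hM)
        apply div_le_div_of_nonneg_left (le_of_lt (mul_pos h2a h3a)) (mul_pos hJ1 (by linarith))
        apply mul_le_mul_of_nonneg_left (by linarith) (le_of_lt hJ1)

noncomputable def stmt4e (a : ℝ) (j : ℕ) : ℝ :=
  if j ≤ 2 then 1 else (2 + a) * (3 + a) / (((j:ℝ) - 1 + a) * ((j:ℝ) + a))

lemma stmt4e_nonneg (a : ℝ) (ha : -2 < a) (j : ℕ) : 0 ≤ stmt4e a j := by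
  unfold stmt4e
  split
  · norm_num
  · rename_i h
    have h3 : (3:ℝ) ≤ (j:ℝ) := by exact_mod_cast (by omega : 3 ≤ j)
    apply le_of_lt
    apply div_pos (mul_pos (by linarith) (by linarith))
      (mul_pos (by linarith) (by linarith))

lemma stmt4_term_le (a : ℝ) (ha : -2 < a) (k j : ℕ) (h2 : 2 ≤ j) (hjk : 2 * j ≤ k) :
    Real.Gamma ((j : ℝ) + a) * Real.Gamma ((k : ℝ) - (j : ℝ) + a)
      ≤ stmt4e a j * (Real.Gamma (2 + a) * Real.Gamma ((k : ℝ) - 2 + a)) := by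
  have h2a : (0:ℝ) < 2 + a := by linarith
  have h3a : (0:ℝ) < 3 + a := by linarith
  have hkR : 2 * (j:ℝ) ≤ (k:ℝ) := by exact_mod_cast hjk
  have hjR : (2:ℝ) ≤ (j:ℝ) := by exact_mod_cast h2
  have hM : 0 < Real.Gamma (2 + a) * Real.Gamma ((k : ℝ) - 2 + a) :=
    mul_pos (Real.Gamma_pos_of_pos h2a) (Real.Gamma_pos_of_pos (by linarith))
  rcases eq_or_lt_of_le h2 with hj2 | hj3
  · -- j = 2
    subst hj2
    have : stmt4e a 2 = 1 := by unfold stmt4e; norm_num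
    rw [this, one_mul]
    have : ((2:ℕ):ℝ) = (2:ℝ) := by norm_num
    rw [this]
  · have hj3' : 3 ≤ j := hj3
    have hj3R : (3:ℝ) ≤ (j:ℝ) := by exact_mod_cast hj3'
    have he : stmt4e a j = (2 + a) * (3 + a) / (((j:ℝ) - 1 + a) * ((j:ℝ) + a)) := by
      unfold stmt4e; rw [if_neg (by omega)]
    rw [he]
    rcases eq_or_lt_of_le hjk with hke | hkl
    · -- 2j = k : middle term
      obtain ⟨i, rfl⟩ : ∃ i, j = i + 1 := ⟨j - 1, by omega⟩
      have hi2 : 2 ≤ i := by omega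
      have hiR : (2:ℝ) ≤ (i:ℝ) := by exact_mod_cast hi2
      have hI : (0:ℝ) < (i:ℝ) + a := by linarith
      have hI1 : (0:ℝ) < (i:ℝ) + 1 + a := by linarith
      have haux := stmt4_aux1 a ha i hi2 k (by omega)
      -- k = 2(i+1), so (k:ℝ) = 2i+2
      have hkn : k = 2 * i + 2 := by omega
      have hkval : (k:ℝ) = 2 * (i:ℝ) + 2 := by exact_mod_cast hkn
      have hB : Real.Gamma ((k:ℝ) - (i:ℝ) + a) = ((i:ℝ) + 1 + a) * Real.Gamma ((i:ℝ) + 1 + a) := by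
        rw [show (k:ℝ) - (i:ℝ) + a = ((i:ℝ) + 1 + a) + 1 by rw [hkval]; ring,
          Real.Gamma_add_one (ne_of_gt hI1)]
      have hA : Real.Gamma (((i:ℕ):ℝ) + 1 + a) = ((i:ℝ) + a) * Real.Gamma ((i:ℝ) + a) := by
        rw [show ((i:ℕ):ℝ) + 1 + a = ((i:ℝ) + a) + 1 by ring, Real.Gamma_add_one (ne_of_gt hI)]
      rw [hB] at haux
      -- haux : Γ(i+a) * ((i+1+a) * Γ(i+1+a)) ≤ (2+a)(3+a)/((i+a)(i+1+a)) * M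
      push_cast
      rw [show (k:ℝ) - ((i:ℝ)+1) + a = (i:ℝ) + 1 + a by rw [hkval]; ring]
      nth_rewrite 1 [hA]
      -- goal : ((i+a) * Γ(i+a)) * Γ(i+1+a) ≤ (2+a)(3+a)/(((i+1)-1+a)*((i+1)+a)) * M
      rw [show ((i:ℝ) + 1) - 1 + a = (i:ℝ) + a by ring]
      have key : Real.Gamma ((i:ℝ)+a) * Real.Gamma ((i:ℝ)+1+a)
          ≤ (2 + a) * (3 + a) / (((i:ℝ) + a) * ((i:ℝ) + 1 + a)) *
            (Real.Gamma (2 + a) * Real.Gamma ((k : ℝ) - 2 + a)) / ((i:ℝ) + 1 + a) := by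
        rw [le_div_iff₀ hI1]
        calc Real.Gamma ((i:ℝ)+a) * Real.Gamma ((i:ℝ)+1+a) * ((i:ℝ)+1+a)
            = Real.Gamma ((i:ℝ)+a) * (((i:ℝ)+1+a) * Real.Gamma ((i:ℝ)+1+a)) := by ring
          _ ≤ _ := haux
      calc ((i:ℝ)+a) * Real.Gamma ((i:ℝ)+a) * Real.Gamma ((i:ℝ)+1+a)
          = ((i:ℝ)+a) * (Real.Gamma ((i:ℝ)+a) * Real.Gamma ((i:ℝ)+1+a)) := by ring
        _ ≤ ((i:ℝ)+a) * ((2 + a) * (3 + a) / (((i:ℝ) + a) * ((i:ℝ) + 1 + a)) *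
            (Real.Gamma (2 + a) * Real.Gamma ((k : ℝ) - 2 + a)) / ((i:ℝ) + 1 + a)) :=
          mul_le_mul_of_nonneg_left key (le_of_lt hI)
        _ = (2 + a) * (3 + a) / (((i:ℝ) + 1 + a) * ((i:ℝ) + 1 + a)) *
            (Real.Gamma (2 + a) * Real.Gamma ((k : ℝ) - 2 + a)) := by
          field_simp
        _ ≤ (2 + a) * (3 + a) / (((i:ℝ) + a) * ((i:ℝ) + 1 + a)) *
            (Real.Gamma (2 + a) * Real.Gamma ((k : ℝ) - 2 + a)) := by
          apply mul_le_mul_of_nonneg_right _ (le_of_lt hM)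
          apply div_le_div_of_nonneg_left (le_of_lt (mul_pos h2a h3a))
            (mul_pos hI hI1)
          nlinarith
    · -- 2j + 1 ≤ k
      have haux := stmt4_aux1 a ha j h2 k (by omega)
      refine le_trans haux ?_
      apply mul_le_mul_of_nonneg_right _ (le_of_lt hM)
      apply div_le_div_of_nonneg_left (le_of_lt (mul_pos h2a h3a))
        (mul_pos (show (0:ℝ) < (j:ℝ) - 1 + a by linarith) (show (0:ℝ) < (j:ℝ) + a by linarith))
      nlinarith

lemma stmt4_term_le_full (a : ℝ) (ha : -2 < a) (k j : ℕ) (hk : 4 ≤ k)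
    (hj : j ∈ Finset.Icc 2 (k - 2)) :
    Real.Gamma ((j : ℝ) + a) * Real.Gamma ((k : ℝ) - (j : ℝ) + a)
      ≤ (stmt4e a j + stmt4e a (k - j)) * (Real.Gamma (2 + a) * Real.Gamma ((k : ℝ) - 2 + a)) := by
  simp only [Finset.mem_Icc] at hj
  obtain ⟨hj2, hjk2⟩ := hj
  have h2a : (0:ℝ) < 2 + a := by linarith
  have hM : 0 < Real.Gamma (2 + a) * Real.Gamma ((k : ℝ) - 2 + a) := by
    have hkR : (4:ℝ) ≤ (k:ℝ) := by exact_mod_cast hk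
    exact mul_pos (Real.Gamma_pos_of_pos h2a) (Real.Gamma_pos_of_pos (by linarith))
  rw [add_mul]
  by_cases hcase : 2 * j ≤ k
  · have h1 := stmt4_term_le a ha k j hj2 hcase
    have h2 : 0 ≤ stmt4e a (k - j) * (Real.Gamma (2 + a) * Real.Gamma ((k : ℝ) - 2 + a)) :=
      mul_nonneg (stmt4e_nonneg a ha _) (le_of_lt hM)
    linarith
  · push_neg at hcase
    have hj'2 : 2 ≤ k - j := by omega
    have hj'k : 2 * (k - j) ≤ k := by omega
    have h1 := stmt4_term_le a ha k (k - j) hj'2 hj'k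
    have hcast : ((k - j : ℕ) : ℝ) = (k:ℝ) - (j:ℝ) := by
      have : j ≤ k := by omega
      exact Nat.cast_sub this
    rw [hcast] at h1
    rw [show (k:ℝ) - ((k:ℝ) - (j:ℝ)) + a = (j:ℝ) + a by ring] at h1
    rw [mul_comm (Real.Gamma ((k:ℝ) - (j:ℝ) + a))] at h1
    have h2 : 0 ≤ stmt4e a j * (Real.Gamma (2 + a) * Real.Gamma ((k : ℝ) - 2 + a)) :=
      mul_nonneg (stmt4e_nonneg a ha _) (le_of_lt hM)
    linarith

lemma stmt4_tele (a : ℝ) (ha : -2 < a) (m : ℕ) (hm : 2 ≤ m) :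
    ∑ j ∈ Finset.Icc 3 m, (1 / (((j:ℝ) - 1 + a) * ((j:ℝ) + a)))
      = 1 / (2 + a) - 1 / ((m:ℝ) + a) := by
  induction m, hm using Nat.le_induction with
  | base => simp
  | succ m hm IH =>
    rw [Finset.sum_Icc_succ_top (by omega : 3 ≤ m + 1), IH]
    have hmR : (2:ℝ) ≤ (m:ℝ) := by exact_mod_cast hm
    have h0 : (2:ℝ) + a ≠ 0 := by intro h; linarith
    have h1 : ((m:ℝ) + a) ≠ 0 := by intro h; linarith
    have h2 : ((m:ℝ) + 1 + a) ≠ 0 := by intro h; linarith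
    push_cast
    rw [show (m:ℝ) + 1 - 1 + a = (m:ℝ) + a by ring]
    field_simp
    ring

lemma stmt4_esum (a : ℝ) (ha : -2 < a) (k : ℕ) (hk : 4 ≤ k) :
    ∑ j ∈ Finset.Icc 2 (k - 2), stmt4e a j ≤ 4 + a := by
  have hsplit : Finset.Icc 2 (k - 2) = insert 2 (Finset.Icc 3 (k - 2)) := by
    ext x; simp [Finset.mem_Icc]; omega
  rw [hsplit, Finset.sum_insert (by simp)]
  have he2 : stmt4e a 2 = 1 := by unfold stmt4e; norm_num
  rw [he2]
  have hrest : ∑ j ∈ Finset.Icc 3 (k - 2), stmt4e a j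
      = (2 + a) * (3 + a) * ∑ j ∈ Finset.Icc 3 (k - 2),
          (1 / (((j:ℝ) - 1 + a) * ((j:ℝ) + a))) := by
    rw [Finset.mul_sum]
    apply Finset.sum_congr rfl
    intro x hx
    simp only [Finset.mem_Icc] at hx
    unfold stmt4e
    rw [if_neg (by omega)]
    rw [mul_one_div]
  rw [hrest, stmt4_tele a ha (k - 2) (by omega)]
  have h2a : (0:ℝ) < 2 + a := by linarith
  have h3a : (0:ℝ) < 3 + a := by linarith
  have hm2 : (2:ℝ) ≤ ((k-2 : ℕ):ℝ) := by exact_mod_cast (by omega : 2 ≤ k - 2)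
  have hpos : (0:ℝ) < ((k-2:ℕ):ℝ) + a := by linarith
  have key : (2 + a) * (3 + a) * (1 / (2 + a) - 1 / (((k-2:ℕ):ℝ) + a))
      ≤ (2 + a) * (3 + a) * (1 / (2 + a)) := by
    apply mul_le_mul_of_nonneg_left _ (le_of_lt (mul_pos h2a h3a))
    have : 0 < 1 / (((k-2:ℕ):ℝ) + a) := by positivity
    linarith
  have heq : (2 + a) * (3 + a) * (1 / (2 + a)) = 3 + a := by field_simp
  linarith

/-- Convolution estimate: for every `a > -2` there is a `C > 0` such that for all `k ≥ 4`,
`Σ_{j=2}^{k-2} Γ(j+a)Γ(k-j+a) ≤ C Γ(k-2+a)`. -/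
theorem stmt4 (a : ℝ) (ha : -2 < a) :
    ∃ C > (0 : ℝ), ∀ k : ℕ, 4 ≤ k →
      ∑ j ∈ Finset.Icc 2 (k - 2),
        Real.Gamma ((j : ℝ) + a) * Real.Gamma ((k : ℝ) - (j : ℝ) + a)
      ≤ C * Real.Gamma ((k : ℝ) - 2 + a) := by
  have h2a : (0:ℝ) < 2 + a := by linarith
  refine ⟨2 * (4 + a) * Real.Gamma (2 + a),
    mul_pos (mul_pos (by linarith) (by linarith)) (Real.Gamma_pos_of_pos h2a), ?_⟩
  intro k hk
  have hkR : (4:ℝ) ≤ (k:ℝ) := by exact_mod_cast hk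
  have hGpos : 0 < Real.Gamma ((k:ℝ) - 2 + a) := Real.Gamma_pos_of_pos (by linarith)
  have hM : 0 < Real.Gamma (2 + a) * Real.Gamma ((k : ℝ) - 2 + a) :=
    mul_pos (Real.Gamma_pos_of_pos h2a) hGpos
  calc ∑ j ∈ Finset.Icc 2 (k - 2),
        Real.Gamma ((j : ℝ) + a) * Real.Gamma ((k : ℝ) - (j : ℝ) + a)
      ≤ ∑ j ∈ Finset.Icc 2 (k - 2),
          (stmt4e a j + stmt4e a (k - j)) * (Real.Gamma (2 + a) * Real.Gamma ((k : ℝ) - 2 + a)) :=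
        Finset.sum_le_sum (fun j hj => stmt4_term_le_full a ha k j hk hj)
    _ = (∑ j ∈ Finset.Icc 2 (k - 2), stmt4e a j + ∑ j ∈ Finset.Icc 2 (k - 2), stmt4e a (k - j))
          * (Real.Gamma (2 + a) * Real.Gamma ((k : ℝ) - 2 + a)) := by
        rw [← Finset.sum_add_distrib, ← Finset.sum_mul]
    _ = (2 * ∑ j ∈ Finset.Icc 2 (k - 2), stmt4e a j)
          * (Real.Gamma (2 + a) * Real.Gamma ((k : ℝ) - 2 + a)) := by
        have hrefl : ∑ j ∈ Finset.Icc 2 (k - 2), stmt4e a (k - j)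
            = ∑ j ∈ Finset.Icc 2 (k - 2), stmt4e a j := by
          apply Finset.sum_nbij' (fun j => k - j) (fun j => k - j)
          · intro x hx; simp only [Finset.mem_Icc] at hx ⊢; omega
          · intro x hx; simp only [Finset.mem_Icc] at hx ⊢; omega
          · intro x hx; simp only [Finset.mem_Icc] at hx; omega
          · intro x hx; simp only [Finset.mem_Icc] at hx; omega
          · intro x hx; rfl
        rw [hrefl]; ring
    _ ≤ (2 * (4 + a)) * (Real.Gamma (2 + a) * Real.Gamma ((k : ℝ) - 2 + a)) := by
        apply mul_le_mul_of_nonneg_right _ (le_of_lt hM)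
        have := stmt4_esum a ha k hk
        linarith
    _ = 2 * (4 + a) * Real.Gamma (2 + a) * Real.Gamma ((k : ℝ) - 2 + a) := by ring
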